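/- Let e₁, …, e_k be pairwise strongly orthogonal rank-one partial isometries in ℂ^{r×s} (e_i e_iᴴ e_i = e_i, and e_i e_jᴴ = 0, e_iᴴ e_j = 0 for i ≠ j), let c = e₁ + ⋯ + e_k, and let z = μ₁ e₁ + ⋯ + μ_k e_k with μ_i ∈ ℂ. Then det(1_r − (c − z)cᴴ) = μ₁ μ₂ ⋯ μ_k. -/

import Mathlib

open Matrix

lemma rank_one_decomp {m n : Type*} [Fintype m] [Fintype n] [DecidableEq n]
    (A : Matrix m n ℂ) (h : A.rank = 1) : ∃ u v, A = vecMulVec u v := by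
  rw [Matrix.rank] at h
  obtain ⟨v₀, hv₀, hall⟩ := finrank_eq_one_iff'.mp h
  choose c hc using fun j =>
    hall ⟨A *ᵥ Pi.single j 1, ⟨Pi.single j 1, rfl⟩⟩
  refine ⟨(v₀ : m → ℂ), c, ?_⟩
  ext i j
  have := congrFun (congrArg Subtype.val (hc j)) i
  simp only [Submodule.coe_smul, Pi.smul_apply, smul_eq_mul, Matrix.mulVec_single_one, Matrix.col_apply,
    mul_one] at this
  rw [vecMulVec_apply, mul_comm]
  exact this.symm

lemma vecMulVec_mul_vecMulVec {m n p : Type*} [Fintype n]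
    (a : m → ℂ) (b : n → ℂ) (c : n → ℂ) (d : p → ℂ) :
    vecMulVec a b * vecMulVec c d = (b ⬝ᵥ c) • vecMulVec a d := by
  ext x y
  simp only [mul_apply, vecMulVec_apply, Matrix.smul_apply, dotProduct, smul_eq_mul,
    Finset.sum_mul]
  exact Finset.sum_congr rfl fun j _ => by ring

lemma conjT_vecMulVec {m n : Type*} (a : m → ℂ) (b : n → ℂ) :
    (vecMulVec a b)ᴴ = vecMulVec (star b) (star a) := by
  ext x y
  simp [vecMulVec_apply, conjTranspose_apply, mul_comm]

lemma det_one_sub_smul_of_tripotent {r s : ℕ} (A : Matrix (Fin r) (Fin s) ℂ)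
    (htri : A * Aᴴ * A = A) (hrank : A.rank = 1) (μ : ℂ) :
    ((1 : Matrix (Fin r) (Fin r) ℂ) - (1 - μ) • (A * Aᴴ)).det = μ := by
  obtain ⟨u, v, rfl⟩ := rank_one_decomp A hrank
  have hA0 : vecMulVec u v ≠ 0 := by
    intro h0
    rw [h0, Matrix.rank_zero] at hrank
    exact one_ne_zero hrank.symm
  set t : ℂ := v ⬝ᵥ star v with ht
  set w : ℂ := star u ⬝ᵥ u with hw
  have hP : vecMulVec u v * (vecMulVec u v)ᴴ = t • vecMulVec u (star u) := by
    rw [conjT_vecMulVec, _root_.vecMulVec_mul_vecMulVec]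
  have htw : t * w = 1 := by
    have h1 : (t * w) • vecMulVec u v = vecMulVec u v := by
      calc (t * w) • vecMulVec u v = t • (w • vecMulVec u v) := (smul_smul t w _).symm
        _ = t • (vecMulVec u (star u) * vecMulVec u v) := by
            rw [_root_.vecMulVec_mul_vecMulVec]
        _ = (t • vecMulVec u (star u)) * vecMulVec u v := (Matrix.smul_mul t _ _).symm
        _ = vecMulVec u v * (vecMulVec u v)ᴴ * vecMulVec u v := by rw [hP]
        _ = vecMulVec u v := htri
    by_contra hne
    have : (t * w - 1) • vecMulVec u v = 0 := by
      rw [sub_smul, one_smul, h1, sub_self]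
    rcases smul_eq_zero.mp this with h | h
    · exact hne (by linear_combination h)
    · exact hA0 h
  have hsm : (1 - μ) • (vecMulVec u v * (vecMulVec u v)ᴴ)
      = vecMulVec (((1 - μ) * t) • u) (star u) := by
    rw [hP]
    ext x y
    simp [vecMulVec_apply, Matrix.smul_apply]
    ring
  rw [hsm]
  have : (1 : Matrix (Fin r) (Fin r) ℂ) - vecMulVec (((1 - μ) * t) • u) (star u)
      = 1 + replicateCol (Fin 1) ((-((1 - μ) * t)) • u) * replicateRow (Fin 1) (star u) := by
    erw [← vecMulVec_eq (Fin 1)]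
    ext x y
    simp only [Matrix.sub_apply, Matrix.add_apply, one_apply, vecMulVec_apply, Pi.smul_apply,
      smul_eq_mul, ← vecMulVec_eq, Pi.neg_apply, neg_mul]
    ring
  rw [this]; erw [det_one_add_replicateCol_mul_replicateRow (ι := Fin 1)]
  have : star u ⬝ᵥ (-((1 - μ) * t)) • u = -((1 - μ) * t) * w := by
    simp [dotProduct_smul, hw, smul_eq_mul]
  rw [this]
  linear_combination (μ - 1) * htw

theorem minor_of_spectral_decomposition {r s k : ℕ}
    (e : Fin k → Matrix (Fin r) (Fin s) ℂ)
    (htri : ∀ i, e i * (e i)ᴴ * e i = e i)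
    (hrank : ∀ i, (e i).rank = 1)
    (horth : ∀ i j, i ≠ j → e i * (e j)ᴴ = 0 ∧ (e i)ᴴ * e j = 0)
    (μ : Fin k → ℂ) :
    ((1 : Matrix (Fin r) (Fin r) ℂ) -
        ((∑ i, e i) - ∑ i, μ i • e i) * (∑ i, e i)ᴴ).det = ∏ i, μ i := by
  have hPP : ∀ i j, i ≠ j → (e i * (e i)ᴴ) * (e j * (e j)ᴴ) = 0 := by
    intro i j hij
    calc (e i * (e i)ᴴ) * (e j * (e j)ᴴ) = e i * ((e i)ᴴ * e j) * (e j)ᴴ := by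
          simp only [Matrix.mul_assoc]
      _ = 0 := by rw [(horth i j hij).2, Matrix.mul_zero, Matrix.zero_mul]
  have h1 : ((∑ i, e i) - ∑ i, μ i • e i) * (∑ i, e i)ᴴ
      = ∑ i, (1 - μ i) • (e i * (e i)ᴴ) := by
    have hsub : (∑ i, e i) - ∑ i, μ i • e i = ∑ i, (1 - μ i) • e i := by
      rw [← Finset.sum_sub_distrib]
      exact Finset.sum_congr rfl fun i _ => by rw [sub_smul, one_smul]
    rw [hsub, conjTranspose_sum, Matrix.sum_mul]
    refine Finset.sum_congr rfl fun i _ => ?_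
    rw [Matrix.mul_sum]
    rw [Finset.sum_eq_single i]
    · rw [Matrix.smul_mul]
    · intro j _ hji
      rw [Matrix.smul_mul, (horth i j (Ne.symm hji)).1, smul_zero]
    · intro h; exact absurd (Finset.mem_univ i) h
  rw [h1]
  have main : ∀ S : Finset (Fin k),
      ((1 : Matrix (Fin r) (Fin r) ℂ) - ∑ i ∈ S, (1 - μ i) • (e i * (e i)ᴴ)).det
        = ∏ i ∈ S, μ i := by
    intro S
    induction S using Finset.induction with
    | empty => simp
    | @insert a S ha ih =>
      rw [Finset.sum_insert ha, Finset.prod_insert ha]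
      have hz : (e a * (e a)ᴴ) * (∑ i ∈ S, (1 - μ i) • (e i * (e i)ᴴ)) = 0 := by
        rw [Matrix.mul_sum]
        refine Finset.sum_eq_zero fun j hj => ?_
        rw [Matrix.mul_smul, hPP a j (by rintro rfl; exact ha hj), smul_zero]
      have key : (1 : Matrix (Fin r) (Fin r) ℂ)
          - ((1 - μ a) • (e a * (e a)ᴴ) + ∑ i ∈ S, (1 - μ i) • (e i * (e i)ᴴ))
          = ((1 : Matrix (Fin r) (Fin r) ℂ) - (1 - μ a) • (e a * (e a)ᴴ))
            * (1 - ∑ i ∈ S, (1 - μ i) • (e i * (e i)ᴴ)) := by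
        rw [Matrix.sub_mul, Matrix.mul_sub, Matrix.mul_sub, Matrix.one_mul,
          Matrix.mul_one, Matrix.one_mul, Matrix.smul_mul, hz, smul_zero]
        abel
      rw [key, det_mul, ih, det_one_sub_smul_of_tripotent (e a) (htri a) (hrank a)]
  exact main Finset.univ
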